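/- Suppose M1 > 0, so that there exists A ∈ ℝⁿ with Aᵢ > 0 for all i and Σᵢ Aᵢ < M1, and suppose the entries of R are finite real numbers. Then the GL relative-risk objective H attains its minimum over the set K' = {A ∈ ℝⁿ : Aᵢ ≥ 0 for all i, Σᵢ Aᵢ ≤ M1} at exactly one point; that is, H has a unique global minimizer on K'. -/

import Mathlib

open Finset

noncomputable def glphi (x : ℝ) : ℝ := x * Real.log x - x

lemma glphi_convex : ConvexOn ℝ (Set.Ici (0:ℝ)) glphi := by
  have h1 : ConvexOn ℝ (Set.Ici (0:ℝ)) (fun x : ℝ => -x) :=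
    ⟨convex_Ici 0, by intro x _ y _ a b _ _ _; simp⟩
  have e : glphi = (fun x : ℝ => x * Real.log x) + fun x : ℝ => -x := by
    funext x; simp [glphi, sub_eq_add_neg]
  rw [e]; exact Real.convexOn_mul_log.add h1

lemma glphi_strict : StrictConvexOn ℝ (Set.Ici (0:ℝ)) glphi := by
  have h1 : ConvexOn ℝ (Set.Ici (0:ℝ)) (fun x : ℝ => -x) :=
    ⟨convex_Ici 0, by intro x _ y _ a b _ _ _; simp⟩
  have e : glphi = (fun x : ℝ => x * Real.log x) + fun x : ℝ => -x := by
    funext x; simp [glphi, sub_eq_add_neg]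
  rw [e]; exact Real.strictConvexOn_mul_log.add_convexOn h1

/-- The Greenland–Longnecker relative-risk objective `H`, with the convention
`0 * log 0 = 0` (which holds for `Real.log` since `Real.log 0 = 0`). -/
noncomputable def glRR_H (n : ℕ) (R N : Fin n → ℝ) (n0 M1 : ℝ) (A : Fin n → ℝ) : ℝ :=
  (∑ i, A i * (-R i - Real.log (N i) + Real.log n0))
    + (∑ i, (A i * Real.log (A i) - A i))
    + ((M1 - ∑ i, A i) * Real.log (M1 - ∑ i, A i) - (M1 - ∑ i, A i))

/-- The feasible set `K'` for the GL relative-risk problem. -/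
def glRR_K (n : ℕ) (M1 : ℝ) : Set (Fin n → ℝ) :=
  {A | (∀ i, 0 ≤ A i) ∧ ∑ i, A i ≤ M1}

lemma glRR_H_eq (n : ℕ) (R N : Fin n → ℝ) (n0 M1 : ℝ) (A : Fin n → ℝ) :
    glRR_H n R N n0 M1 A =
      (∑ i, A i * (-R i - Real.log (N i) + Real.log n0))
        + (∑ i, glphi (A i)) + glphi (M1 - ∑ i, A i) := rfl

lemma glRR_K_convex (n : ℕ) (M1 : ℝ) : Convex ℝ (glRR_K n M1) := by
  intro A hA B hB a b ha hb hab
  refine ⟨fun i => ?_, ?_⟩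
  · have h : (a • A + b • B) i = a * A i + b * B i := by simp
    rw [h]
    exact add_nonneg (mul_nonneg ha (hA.1 i)) (mul_nonneg hb (hB.1 i))
  · have h : ∑ i, (a • A + b • B) i = a * ∑ i, A i + b * ∑ i, B i := by
      simp [Finset.sum_add_distrib, Finset.mul_sum]
    rw [h]
    calc a * ∑ i, A i + b * ∑ i, B i ≤ a * M1 + b * M1 :=
          add_le_add (mul_le_mul_of_nonneg_left hA.2 ha) (mul_le_mul_of_nonneg_left hB.2 hb)
      _ = M1 := by rw [← add_mul, hab, one_mul]

lemma glRR_H_strictConvexOn (n : ℕ) (R N : Fin n → ℝ) (n0 M1 : ℝ) :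
    StrictConvexOn ℝ (glRR_K n M1) (glRR_H n R N n0 M1) := by
  refine ⟨glRR_K_convex n M1, ?_⟩
  intro A hA B hB hne a b ha hb hab
  obtain ⟨hApos, hAsum⟩ := hA
  obtain ⟨hBpos, hBsum⟩ := hB
  set c : Fin n → ℝ := fun i => -R i - Real.log (N i) + Real.log n0 with hc
  set C : Fin n → ℝ := a • A + b • B with hCdef
  have hC : ∀ i, C i = a * A i + b * B i := fun i => by simp [hCdef]
  have hCsum : ∑ i, C i = a * ∑ i, A i + b * ∑ i, B i := by
    simp [hCdef, Finset.sum_add_distrib, Finset.mul_sum]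
  -- linear part
  have h1 : ∑ i, C i * c i = a * ∑ i, A i * c i + b * ∑ i, B i * c i := by
    rw [Finset.mul_sum, Finset.mul_sum, ← Finset.sum_add_distrib]
    exact Finset.sum_congr rfl fun i _ => by rw [hC i]; ring
  -- entropy sum part, strict
  have h2 : ∑ i, glphi (C i) < a * ∑ i, glphi (A i) + b * ∑ i, glphi (B i) := by
    rw [Finset.mul_sum, Finset.mul_sum, ← Finset.sum_add_distrib]
    obtain ⟨i₀, hi₀⟩ := Function.ne_iff.mp hne
    refine Finset.sum_lt_sum (fun i _ => ?_) ⟨i₀, Finset.mem_univ i₀, ?_⟩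
    · have := glphi_convex.2 (hApos i) (hBpos i) ha.le hb.le hab
      simpa [hC i, smul_eq_mul] using this
    · have := glphi_strict.2 (hApos i₀) (hBpos i₀) hi₀ ha hb hab
      simpa [hC i₀, smul_eq_mul] using this
  -- remainder part
  have h3 : glphi (M1 - ∑ i, C i)
      ≤ a * glphi (M1 - ∑ i, A i) + b * glphi (M1 - ∑ i, B i) := by
    have hrw : M1 - ∑ i, C i = a * (M1 - ∑ i, A i) + b * (M1 - ∑ i, B i) := by
      rw [hCsum]; linear_combination M1 * hab.symm
    rw [hrw]
    have := glphi_convex.2 (sub_nonneg.mpr hAsum) (sub_nonneg.mpr hBsum) ha.le hb.le hab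
    simpa [smul_eq_mul] using this
  have eA : a * glRR_H n R N n0 M1 A
      = a * ∑ i, A i * c i + a * ∑ i, glphi (A i) + a * glphi (M1 - ∑ i, A i) := by
    rw [glRR_H_eq]; ring
  have eB : b * glRR_H n R N n0 M1 B
      = b * ∑ i, B i * c i + b * ∑ i, glphi (B i) + b * glphi (M1 - ∑ i, B i) := by
    rw [glRR_H_eq]; ring
  have eC : glRR_H n R N n0 M1 C
      = ∑ i, C i * c i + ∑ i, glphi (C i) + glphi (M1 - ∑ i, C i) := glRR_H_eq _ _ _ _ _ _
  show glRR_H n R N n0 M1 C < a • glRR_H n R N n0 M1 A + b • glRR_H n R N n0 M1 B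
  simp only [smul_eq_mul]
  linarith [h1, h2, h3]

/-- If `M1 > 0` (so a strictly feasible point exists) and the reported log relative risks
are (finite) real numbers, the GL relative-risk objective `H` attains its minimum over
`K'` at exactly one point. -/
theorem glRR_unique_global_minimizer
    (n : ℕ) (hn : 1 ≤ n) (R N : Fin n → ℝ) (hN : ∀ i, 0 < N i)
    (n0 M1 : ℝ) (hn0 : 0 < n0) (hM1 : 0 < M1)
    (hfeas : ∃ A : Fin n → ℝ, (∀ i, 0 < A i) ∧ ∑ i, A i < M1) :
    ∃! A₀ : Fin n → ℝ, A₀ ∈ glRR_K n M1 ∧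
      ∀ A ∈ glRR_K n M1, glRR_H n R N n0 M1 A₀ ≤ glRR_H n R N n0 M1 A := by
  have hcont : Continuous (glRR_H n R N n0 M1) := by
    have hs : Continuous fun A : Fin n → ℝ => ∑ i, A i :=
      continuous_finset_sum _ fun i _ => continuous_apply i
    have hms : Continuous fun A : Fin n → ℝ => M1 - ∑ i, A i := continuous_const.sub hs
    unfold glRR_H
    exact ((continuous_finset_sum _ fun i _ => (continuous_apply i).mul continuous_const).add
      (continuous_finset_sum _ fun i _ =>
        (Real.continuous_mul_log.comp (continuous_apply i)).sub (continuous_apply i))).add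
      ((Real.continuous_mul_log.comp hms).sub hms)
  have hclosed : IsClosed (glRR_K n M1) := by
    have heq : glRR_K n M1 = (⋂ i, {A : Fin n → ℝ | 0 ≤ A i}) ∩ {A | ∑ i, A i ≤ M1} := by
      ext A; simp [glRR_K, Set.mem_iInter]
    rw [heq]
    exact (isClosed_iInter fun i => isClosed_le continuous_const (continuous_apply i)).inter
      (isClosed_le (continuous_finset_sum _ fun i _ => continuous_apply i) continuous_const)
  have hsub : glRR_K n M1 ⊆ Set.Icc (fun _ => (0:ℝ)) (fun _ => M1) := by
    rintro A ⟨h0, hs⟩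
    refine ⟨fun i => h0 i, fun i => ?_⟩
    calc A i ≤ ∑ j, A j := Finset.single_le_sum (fun j _ => h0 j) (Finset.mem_univ i)
      _ ≤ M1 := hs
  have hcpt : IsCompact (glRR_K n M1) :=
    IsCompact.of_isClosed_subset isCompact_Icc hclosed hsub
  have h0mem : (fun _ => (0:ℝ)) ∈ glRR_K n M1 := ⟨fun i => le_refl 0, by simp [hM1.le]⟩
  obtain ⟨A₀, hA₀, hmin⟩ := hcpt.exists_isMinOn ⟨_, h0mem⟩ hcont.continuousOn
  refine ⟨A₀, ⟨hA₀, fun A hAK => isMinOn_iff.mp hmin A hAK⟩, ?_⟩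
  rintro B ⟨hBK, hBmin⟩
  exact (glRR_H_strictConvexOn n R N n0 M1).eq_of_isMinOn
    (isMinOn_iff.mpr fun A hAK => hBmin A hAK) hmin hBK hA₀
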